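/- arXiv:2204.00614 — 2 statements merged into one kernel-verified Lean document; each statement's English description precedes it below -/
import Mathlib

section
/- Let M¹(v), M²(v) be m×m real matrices and η¹(v), η²(v) ∈ ℝ^m, parameterized by v > 0, such that as v → 0, M¹(v) → M and M²(v) → M for some invertible matrix M, and η¹(v) → η, η²(v) → η for some η ∈ ℝ^m. If γ(v) ∈ ℝ^m satisfies the componentwise inequalities η¹ᵢ(v) ≤ (M¹(v)γ(v))ᵢ and (M²(v)γ(v))ᵢ ≤ η²ᵢ(v) for all i = 1,...,m, then γ(v) → M⁻¹η as v → 0. -/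
open Matrix Filter Topology

private noncomputable def Sabs {m : ℕ} (A : Matrix (Fin m) (Fin m) ℝ) : ℝ :=
  ∑ i, ∑ j, |A i j|

private lemma Sabs_nonneg {m : ℕ} (A : Matrix (Fin m) (Fin m) ℝ) : 0 ≤ Sabs A :=
  Finset.sum_nonneg fun _ _ => Finset.sum_nonneg fun _ _ => abs_nonneg _

private lemma abs_mulVec_le {m : ℕ} (A : Matrix (Fin m) (Fin m) ℝ) (x : Fin m → ℝ) (i : Fin m) :
    |(A *ᵥ x) i| ≤ Sabs A * ‖x‖ := by
  have h1 : |(A *ᵥ x) i| ≤ ∑ j, |A i j| * ‖x‖ := by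
    rw [Matrix.mulVec, dotProduct]
    refine (Finset.abs_sum_le_sum_abs _ _).trans ?_
    refine Finset.sum_le_sum fun j _ => ?_
    rw [abs_mul]
    exact mul_le_mul_of_nonneg_left (norm_le_pi_norm x j) (abs_nonneg _)
  refine h1.trans ?_
  rw [← Finset.sum_mul]
  refine mul_le_mul_of_nonneg_right ?_ (norm_nonneg _)
  exact Finset.single_le_sum (f := fun i => ∑ j, |A i j|)
    (fun _ _ => Finset.sum_nonneg fun _ _ => abs_nonneg _) (Finset.mem_univ i)

private lemma norm_mulVec_le {m : ℕ} (A : Matrix (Fin m) (Fin m) ℝ) (x : Fin m → ℝ) :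
    ‖A *ᵥ x‖ ≤ Sabs A * ‖x‖ :=
  (pi_norm_le_iff_of_nonneg (mul_nonneg (Sabs_nonneg A) (norm_nonneg x))).2 fun i =>
    abs_mulVec_le A x i

private lemma continuous_Sabs {m : ℕ} : Continuous (Sabs (m := m)) :=
  continuous_finset_sum _ fun i _ => continuous_finset_sum _ fun j _ =>
    (continuous_id.matrix_elem i j).abs

set_option maxHeartbeats 1000000 in
/-- A linear algebra limit tool: if `M¹(v), M²(v) → M` (invertible), `η¹(v), η²(v) → η`
as `v → 0⁺`, and `γ(v)` satisfies `η¹ᵢ(v) ≤ (M¹(v)γ(v))ᵢ` and `(M²(v)γ(v))ᵢ ≤ η²ᵢ(v)` for all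
`i` and all `v > 0`, then `γ(v) → M⁻¹η` as `v → 0⁺`. -/
theorem linear_algebra_limit {m : ℕ}
    (M1 M2 : ℝ → Matrix (Fin m) (Fin m) ℝ) (η1 η2 : ℝ → (Fin m → ℝ))
    (M : Matrix (Fin m) (Fin m) ℝ) (η : Fin m → ℝ) (γ : ℝ → (Fin m → ℝ))
    (hM : IsUnit M.det)
    (hM1 : Tendsto M1 (nhdsWithin 0 (Set.Ioi 0)) (nhds M))
    (hM2 : Tendsto M2 (nhdsWithin 0 (Set.Ioi 0)) (nhds M))
    (hη1 : Tendsto η1 (nhdsWithin 0 (Set.Ioi 0)) (nhds η))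
    (hη2 : Tendsto η2 (nhdsWithin 0 (Set.Ioi 0)) (nhds η))
    (hineq1 : ∀ v ∈ Set.Ioi (0 : ℝ), ∀ i, η1 v i ≤ (M1 v *ᵥ γ v) i)
    (hineq2 : ∀ v ∈ Set.Ioi (0 : ℝ), ∀ i, (M2 v *ᵥ γ v) i ≤ η2 v i) :
    Tendsto γ (nhdsWithin 0 (Set.Ioi 0)) (nhds (M⁻¹ *ᵥ η)) := by
  set l := nhdsWithin (0:ℝ) (Set.Ioi 0) with hl
  -- eventually `M2 v` is invertible
  have hdet : Tendsto (fun v => (M2 v).det) l (nhds M.det) :=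
    (continuous_id.matrix_det.tendsto M).comp hM2
  have heu : ∀ᶠ v in l, IsUnit (M2 v).det := by
    filter_upwards [hdet.eventually_ne hM.ne_zero] with v hv
    exact isUnit_iff_ne_zero.2 hv
  -- inverse converges
  have hinv : Tendsto (fun v => (M2 v)⁻¹) l (nhds M⁻¹) := by
    refine (continuousAt_matrix_inv M ?_).tendsto.comp hM2
    obtain ⟨u, hu⟩ := hM
    rw [← hu]
    exact NormedRing.inverse_continuousAt u
  -- constants
  obtain ⟨C, hC0, hCgt⟩ : ∃ C : ℝ, 0 < C ∧ Sabs M⁻¹ < C :=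
    ⟨Sabs M⁻¹ + 1, by linarith [Sabs_nonneg (M⁻¹)], by linarith⟩
  have hCev : ∀ᶠ v in l, Sabs ((M2 v)⁻¹) ≤ C := by
    have hS2 : Tendsto (fun v => Sabs ((M2 v)⁻¹)) l (nhds (Sabs M⁻¹)) :=
      (continuous_Sabs.tendsto _).comp hinv
    exact (hS2.eventually_lt_const hCgt).mono fun v h => h.le
  -- difference of matrices is small
  have hΔ : Tendsto (fun v => Sabs (M1 v - M2 v)) l (nhds 0) := by
    have h0 : Tendsto (fun v => M1 v - M2 v) l (nhds (M - M)) := hM1.sub hM2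
    rw [sub_self] at h0
    have := (continuous_Sabs.tendsto _).comp h0
    simpa [Sabs, Function.comp_def] using this
  have hεev : ∀ᶠ v in l, Sabs (M1 v - M2 v) ≤ 1 / (2 * C) :=
    (hΔ.eventually_lt_const (by positivity)).mono fun v h => h.le
  -- eventual bounds on η1, η2
  obtain ⟨D, hD0, hDgt⟩ : ∃ D : ℝ, 0 ≤ D ∧ ‖η‖ < D :=
    ⟨‖η‖ + 1, by linarith [norm_nonneg η], by linarith⟩
  have hD1 : ∀ᶠ v in l, ‖η1 v‖ ≤ D :=
    (((continuous_norm.tendsto _).comp hη1).eventually_lt_const hDgt).mono fun v h => h.le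
  have hD2 : ∀ᶠ v in l, ‖η2 v‖ ≤ D :=
    (((continuous_norm.tendsto _).comp hη2).eventually_lt_const hDgt).mono fun v h => h.le
  have hmem : ∀ᶠ v in l, v ∈ Set.Ioi (0:ℝ) := self_mem_nhdsWithin
  -- norm of w bound
  have hwbnd : ∀ᶠ v in l, ‖M2 v *ᵥ γ v‖ ≤ D + Sabs (M1 v - M2 v) * ‖γ v‖ := by
    filter_upwards [hD1, hD2, hmem] with v h1 h2 hv
    refine (pi_norm_le_iff_of_nonneg
      (by have := mul_nonneg (Sabs_nonneg (M1 v - M2 v)) (norm_nonneg (γ v)); linarith)).2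
      fun i => ?_
    have hzi : (M1 v *ᵥ γ v) i - (M2 v *ᵥ γ v) i = ((M1 v - M2 v) *ᵥ γ v) i := by
      rw [Matrix.sub_mulVec]; simp
    have habs : |((M1 v - M2 v) *ᵥ γ v) i| ≤ Sabs (M1 v - M2 v) * ‖γ v‖ :=
      abs_mulVec_le _ _ i
    have hub : (M2 v *ᵥ γ v) i ≤ D :=
      (hineq2 v hv i).trans ((le_abs_self _).trans ((norm_le_pi_norm (η2 v) i).trans h2))
    have hlb : -D ≤ η1 v i := by
      have : |η1 v i| ≤ D := (norm_le_pi_norm (η1 v) i).trans h1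
      linarith [abs_le.1 this |>.1]
    have h1' := hineq1 v hv i
    rw [Real.norm_eq_abs, abs_le]
    have hab := abs_le.1 habs
    constructor
    · linarith [hab.2]
    · linarith [mul_nonneg (Sabs_nonneg (M1 v - M2 v)) (norm_nonneg (γ v))]
  -- boundedness of γ
  have hγbnd : ∀ᶠ v in l, ‖γ v‖ ≤ 2 * C * D := by
    filter_upwards [heu, hCev, hεev, hwbnd] with v hu hc hε hw
    have hγeq : γ v = (M2 v)⁻¹ *ᵥ (M2 v *ᵥ γ v) := by
      rw [Matrix.mulVec_mulVec, Matrix.nonsing_inv_mul _ hu, Matrix.one_mulVec]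
    have h1 : ‖γ v‖ ≤ Sabs ((M2 v)⁻¹) * ‖M2 v *ᵥ γ v‖ := by
      conv_lhs => rw [hγeq]
      exact norm_mulVec_le _ _
    have h2 : Sabs ((M2 v)⁻¹) * ‖M2 v *ᵥ γ v‖ ≤ C * ‖M2 v *ᵥ γ v‖ :=
      mul_le_mul_of_nonneg_right hc (norm_nonneg _)
    have h3 : C * ‖M2 v *ᵥ γ v‖ ≤ C * (D + Sabs (M1 v - M2 v) * ‖γ v‖) :=
      mul_le_mul_of_nonneg_left hw hC0.le
    have hε2 : Sabs (M1 v - M2 v) * (2 * C) ≤ 1 :=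
      (le_div_iff₀ (by positivity)).1 hε
    have hmul : Sabs (M1 v - M2 v) * (2 * C) * ‖γ v‖ ≤ 1 * ‖γ v‖ :=
      mul_le_mul_of_nonneg_right hε2 (norm_nonneg _)
    have h6 : ‖γ v‖ ≤ C * D + C * (Sabs (M1 v - M2 v) * ‖γ v‖) := by
      have h := h1.trans (h2.trans h3)
      rw [mul_add] at h
      exact h
    have h7 : C * (Sabs (M1 v - M2 v) * ‖γ v‖) ≤ ‖γ v‖ / 2 := by
      have hr : C * (Sabs (M1 v - M2 v) * ‖γ v‖)
          = Sabs (M1 v - M2 v) * (2 * C) * ‖γ v‖ / 2 := by ring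
      rw [hr]
      linarith [hmul]
    linarith [h6, h7]
  -- z := (M1 - M2) γ tends to 0
  have hz : Tendsto (fun v => (M1 v - M2 v) *ᵥ γ v) l (nhds 0) := by
    refine squeeze_zero_norm' ?_ (by simpa using hΔ.mul_const (2 * C * D))
    filter_upwards [hγbnd] with v hb
    exact (norm_mulVec_le _ _).trans (mul_le_mul_of_nonneg_left hb (Sabs_nonneg _))
  -- w tends to η
  have hw : Tendsto (fun v => M2 v *ᵥ γ v) l (nhds η) := by
    rw [tendsto_pi_nhds]
    intro i
    have hη1i : Tendsto (fun v => η1 v i) l (nhds (η i)) :=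
      ((continuous_apply i).tendsto _).comp hη1
    have hη2i : Tendsto (fun v => η2 v i) l (nhds (η i)) :=
      ((continuous_apply i).tendsto _).comp hη2
    have hzi : Tendsto (fun v => ((M1 v - M2 v) *ᵥ γ v) i) l (nhds 0) := by
      have := ((continuous_apply i).tendsto _).comp hz
      simpa [Function.comp_def] using this
    have hlow : Tendsto (fun v => η1 v i - ((M1 v - M2 v) *ᵥ γ v) i) l (nhds (η i)) := by
      have := hη1i.sub hzi
      simpa using this
    refine tendsto_of_tendsto_of_tendsto_of_le_of_le' hlow hη2i ?_ ?_
    · filter_upwards [hmem] with v hv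
      have h1' := hineq1 v hv i
      have hzi' : ((M1 v - M2 v) *ᵥ γ v) i = (M1 v *ᵥ γ v) i - (M2 v *ᵥ γ v) i := by
        rw [Matrix.sub_mulVec]; simp
      rw [hzi']; linarith
    · filter_upwards [hmem] with v hv
      exact hineq2 v hv i
  -- conclude
  have hcont : Continuous fun p : Matrix (Fin m) (Fin m) ℝ × (Fin m → ℝ) => p.1 *ᵥ p.2 :=
    continuous_fst.matrix_mulVec continuous_snd
  have hcomp : Tendsto (fun v => (M2 v)⁻¹ *ᵥ (M2 v *ᵥ γ v)) l (nhds (M⁻¹ *ᵥ η)) :=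
    (hcont.tendsto (M⁻¹, η)).comp (hinv.prodMk_nhds hw)
  refine hcomp.congr' ?_
  filter_upwards [heu] with v hu
  rw [Matrix.mulVec_mulVec, Matrix.nonsing_inv_mul _ hu, Matrix.one_mulVec]
end

section
/- Fix T > 0 and real numbers ξ₁ < ξ₂ < ... < ξ_m. The m×m matrix with entries A_{ij} = p(T/2, ξ_j - (i-1)), where p(t,x) = (2πt)^{-1/2} exp(-x²/(2t)) is the heat kernel, is invertible; its determinant equals (πT)^{-m/2} ∏_{i=1}^m exp(-(ξ_i² + (i-1)²)/T) · ∏_{i<j} (exp(2ξ_j/T) - exp(2ξ_i/T)), which is nonzero. -/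
open Real Matrix Finset

/-- The one-dimensional heat kernel `p(t,x) = (2πt)^{-1/2} exp(-x²/(2t))` for `t > 0`. -/
noncomputable def heatKernel (t x : ℝ) : ℝ :=
  Real.exp (-x ^ 2 / (2 * t)) / Real.sqrt (2 * Real.pi * t)

/-- For `T > 0` and `ξ₁ < ⋯ < ξ_m`, the matrix `A_{ij} = p(T/2, ξ_j - (i-1))` has determinant
`(πT)^{-m/2} ∏ᵢ exp(-(ξᵢ² + (i-1)²)/T) · ∏_{i<j}(exp(2ξ_j/T) - exp(2ξᵢ/T))`, which is nonzero;
in particular the matrix is invertible. -/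
theorem heatKernel_matrix_det {m : ℕ} (T : ℝ) (hT : 0 < T)
    (ξ : Fin m → ℝ) (hξ : StrictMono ξ) :
    (Matrix.of fun i j : Fin m => heatKernel (T / 2) (ξ j - (i : ℝ))).det
        = (Real.pi * T) ^ (-(m : ℝ) / 2)
            * (∏ i : Fin m, Real.exp (-(ξ i ^ 2 + (i : ℝ) ^ 2) / T))
            * ∏ i : Fin m, ∏ j ∈ Finset.Ioi i,
                (Real.exp (2 * ξ j / T) - Real.exp (2 * ξ i / T)) ∧
      (Matrix.of fun i j : Fin m => heatKernel (T / 2) (ξ j - (i : ℝ))).det ≠ 0 ∧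
      IsUnit (Matrix.of fun i j : Fin m => heatKernel (T / 2) (ξ j - (i : ℝ))) := by
  have hπT : (0:ℝ) < Real.pi * T := mul_pos Real.pi_pos hT
  set c : ℝ := (Real.sqrt (Real.pi * T))⁻¹ with hc
  set x : Fin m → ℝ := fun j => Real.exp (2 * ξ j / T) with hx
  -- factor the matrix
  have hA : (Matrix.of fun i j : Fin m => heatKernel (T / 2) (ξ j - (i : ℝ)))
      = c • Matrix.of (fun i j : Fin m =>
          Real.exp (-(ξ j ^ 2) / T) * (Real.exp (-((i:ℝ)^2) / T) * x j ^ (i:ℕ))) := by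
    ext i j
    simp only [Matrix.of_apply, Matrix.smul_apply, smul_eq_mul, heatKernel, hx]
    rw [← Real.exp_nat_mul, ← Real.exp_add, ← Real.exp_add,
      show 2 * Real.pi * (T/2) = Real.pi * T by ring, div_eq_mul_inv, mul_comm]
    congr 1
    field_simp
    ring
  have hdet : (Matrix.of fun i j : Fin m => heatKernel (T / 2) (ξ j - (i : ℝ))).det
      = (Real.pi * T) ^ (-(m : ℝ) / 2)
          * (∏ i : Fin m, Real.exp (-(ξ i ^ 2 + (i : ℝ) ^ 2) / T))
          * ∏ i : Fin m, ∏ j ∈ Finset.Ioi i,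
              (Real.exp (2 * ξ j / T) - Real.exp (2 * ξ i / T)) := by
    rw [hA, Matrix.det_smul, Matrix.det_mul_row (fun j : Fin m => Real.exp (-(ξ j ^ 2) / T))
      (fun i j : Fin m => Real.exp (-((i:ℝ)^2) / T) * x j ^ (i:ℕ))]
    have h3 : (Matrix.det fun i j : Fin m => Real.exp (-((i:ℝ)^2) / T) * x j ^ (i:ℕ))
        = (∏ i : Fin m, Real.exp (-((i:ℝ)^2) / T)) * ((Matrix.vandermonde x)ᵀ).det :=
      Matrix.det_mul_column _ _
    rw [h3, Matrix.det_transpose, Matrix.det_vandermonde]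
    have h1 : c ^ Fintype.card (Fin m) = (Real.pi * T) ^ (-(m : ℝ) / 2) := by
      rw [Fintype.card_fin, hc, Real.sqrt_eq_rpow, ← Real.rpow_neg hπT.le,
        ← Real.rpow_natCast ((Real.pi * T) ^ (-(1/2):ℝ)) m, ← Real.rpow_mul hπT.le]
      ring_nf
    have h2 : (∏ j : Fin m, Real.exp (-(ξ j ^ 2) / T))
        * ∏ i : Fin m, Real.exp (-((i:ℝ)^2) / T)
        = ∏ i : Fin m, Real.exp (-(ξ i ^ 2 + (i : ℝ) ^ 2) / T) := by
      rw [← Finset.prod_mul_distrib]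
      refine Finset.prod_congr rfl fun i _ => ?_
      rw [← Real.exp_add]
      congr 1
      ring
    rw [h1]
    rw [show ∀ a b d e : ℝ, a * (b * (d * e)) = a * (b * d) * e by intros; ring, h2]
  have hne : (Matrix.of fun i j : Fin m => heatKernel (T / 2) (ξ j - (i : ℝ))).det ≠ 0 := by
    rw [hdet]
    refine mul_ne_zero (mul_ne_zero ?_ ?_) ?_
    · exact (Real.rpow_pos_of_pos hπT _).ne'
    · exact Finset.prod_ne_zero_iff.2 fun i _ => (Real.exp_pos _).ne'
    · refine Finset.prod_ne_zero_iff.2 fun i _ => Finset.prod_ne_zero_iff.2 fun j hj => ?_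
      have hij : ξ i < ξ j := hξ (Finset.mem_Ioi.mp hj)
      have : Real.exp (2 * ξ i / T) < Real.exp (2 * ξ j / T) := by
        apply Real.exp_lt_exp.2
        gcongr
      exact sub_ne_zero.2 this.ne'
  exact ⟨hdet, hne, (Matrix.isUnit_iff_isUnit_det _).2 (isUnit_iff_ne_zero.2 hne)⟩
end
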